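/- Let G be a connected finite simple graph and (H, f) a valued cover of G. If f(v,1) + f(v,2) + ⋯ + f(v,κ) > deg_G(v) for every vertex v ∈ V(G), then H has a strictly f-degenerate transversal R such that deg_{H[R]}(v,q) < f(v,q) for every vertex (v,q) ∈ R. -/

import Mathlib

open SimpleGraph

universe u

/-- `H` is a cover of `G` with `κ` parts: every edge of `H` joins distinct fibres
`X_u`, `X_v` with `uv ∈ E(G)` (in particular each fibre is independent), and the
edges between two fibres form a (possibly empty) matching. -/
def IsCover {V : Type u} (κ : ℕ) (G : SimpleGraph V) (H : SimpleGraph (V × Fin κ)) : Prop :=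
  (∀ (u v : V) (p q : Fin κ), H.Adj (u, p) (v, q) → G.Adj u v) ∧
  (∀ (u v : V) (p q q' : Fin κ), H.Adj (u, p) (v, q) → H.Adj (u, p) (v, q') → q = q')

/-- The subgraph of `Γ` induced on `R` is strictly `f`-degenerate: every nonempty
subgraph with vertices inside `R` has a vertex whose degree there is `< f`. -/
def StrictlyFDegenerateOn {α : Type u} (Γ : SimpleGraph α) (f : α → ℕ) (R : Set α) : Prop :=
  ∀ S : Set α, S ⊆ R → S.Nonempty → ∃ x ∈ S, (S ∩ {y | Γ.Adj x y}).ncard < f x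

/-- `R` is a transversal of a cover with fibres `X_v = {v} × Fin κ`. -/
def IsTransversal {V : Type u} {κ : ℕ} (R : Set (V × Fin κ)) : Prop :=
  ∀ v : V, ∃! p : Fin κ, (v, p) ∈ R

/-- `H` has a strictly `f`-degenerate transversal. -/
def HasSFDTransversal {V : Type u} {κ : ℕ} (H : SimpleGraph (V × Fin κ))
    (f : V × Fin κ → ℕ) : Prop :=
  ∃ R : Set (V × Fin κ), IsTransversal R ∧ StrictlyFDegenerateOn H f R

open Classical in
/-- Number of conflict neighbours (as an integer) of colour `q` at vertex `v`,
against the assignment `p`. -/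
private noncomputable def dzAux {V : Type} [Fintype V] {κ : ℕ}
    (H : SimpleGraph (V × Fin κ)) (p : V → Fin κ) (v : V) (q : Fin κ) : ℤ :=
  ∑ u : V, if H.Adj (v, q) (u, p u) then 1 else 0

private theorem key_lemma {V : Type} [Fintype V] (G : SimpleGraph V) (κ : ℕ) (hκ : 0 < κ)
    (H : SimpleGraph (V × Fin κ)) (hH : IsCover κ G H) (f : V × Fin κ → ℕ)
    (hf : ∀ v : V, (G.neighborSet v).ncard < ∑ q : Fin κ, f (v, q)) :
    ∃ p : V → Fin κ, ∀ v : V,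
      (({u : V | H.Adj (v, p v) (u, p u)}).ncard : ℤ) < (f (v, p v) : ℤ) := by
  classical
  have hnself : ∀ (v : V) (q q' : Fin κ), ¬ H.Adj (v, q) (v, q') := by
    intro v q q' h
    exact (G.loopless.irrefl v) (hH.1 v v q q' h)
  -- dz equals the ncard of the conflict set
  have hdz_ncard : ∀ (p : V → Fin κ) (v : V) (q : Fin κ),
      dzAux H p v q = (({u : V | H.Adj (v, q) (u, p u)}).ncard : ℤ) := by
    intro p v q
    have h1 : {u : V | H.Adj (v, q) (u, p u)}.toFinset
        = Finset.univ.filter (fun u => H.Adj (v, q) (u, p u)) := Set.toFinset_setOf _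
    rw [Set.ncard_eq_toFinset_card', h1, Finset.card_filter]
    push_cast
    rfl
  have hdz_nonneg : ∀ (p : V → Fin κ) (v : V) (q : Fin κ), 0 ≤ dzAux H p v q := by
    intro p v q
    exact Finset.sum_nonneg (fun u _ => by positivity)
  -- pigeonhole: some colour has slack
  have pigeon : ∀ (p : V → Fin κ) (v : V), ∃ q : Fin κ,
      dzAux H p v q + 1 ≤ (f (v, q) : ℤ) := by
    intro p v
    by_contra hcon
    push_neg at hcon
    have hsum : ∑ q : Fin κ, (f (v, q) : ℤ) ≤ ∑ q : Fin κ, dzAux H p v q :=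
      Finset.sum_le_sum (fun q _ => by have := hcon q; omega)
    have hswap : ∑ q : Fin κ, dzAux H p v q
        = ∑ u : V, ∑ q : Fin κ, (if H.Adj (v, q) (u, p u) then (1:ℤ) else 0) := by
      unfold dzAux
      exact Finset.sum_comm
    have hbound : ∀ u : V, ∑ q : Fin κ, (if H.Adj (v, q) (u, p u) then (1:ℤ) else 0)
        ≤ (if G.Adj v u then (1:ℤ) else 0) := by
      intro u
      by_cases hadj : G.Adj v u
      · rw [Finset.sum_boole, if_pos hadj]
        have hle : (Finset.univ.filter (fun q : Fin κ => H.Adj (v, q) (u, p u))).card ≤ 1 := by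
          refine Finset.card_le_one.mpr ?_
          intro q hq q' hq'
          exact hH.2 u v (p u) q q' (H.adj_symm (Finset.mem_filter.mp hq).2)
            (H.adj_symm (Finset.mem_filter.mp hq').2)
        exact_mod_cast hle
      · have hno : ∀ q : Fin κ, ¬ H.Adj (v, q) (u, p u) := by
          intro q hq
          exact hadj (hH.1 v u q (p u) hq)
        rw [if_neg hadj]
        rw [Finset.sum_eq_zero (fun q _ => if_neg (hno q))]
    have hdeg : ∑ u : V, (if G.Adj v u then (1:ℤ) else 0)
        = ((G.neighborSet v).ncard : ℤ) := by
      rw [Finset.sum_boole]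
      have h2 : G.neighborSet v = ↑(Finset.univ.filter (fun u => G.Adj v u)) := by
        ext u
        simp [SimpleGraph.neighborSet]
      rw [h2, Set.ncard_coe_finset]
    have hfv : ((G.neighborSet v).ncard : ℤ) < ∑ q : Fin κ, (f (v, q) : ℤ) := by
      exact_mod_cast hf v
    have : ∑ q : Fin κ, dzAux H p v q ≤ ((G.neighborSet v).ncard : ℤ) := by
      rw [hswap, ← hdeg]
      exact Finset.sum_le_sum (fun u _ => hbound u)
    omega
  -- the potential
  have hVne : Nonempty (V → Fin κ) := ⟨fun _ => ⟨0, hκ⟩⟩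
  obtain ⟨p, hp⟩ := Finite.exists_max
    (fun p : V → Fin κ => (∑ u : V, (2 * (f (u, p u) : ℤ))) - ∑ u : V, dzAux H p u (p u))
  refine ⟨p, ?_⟩
  intro v
  by_contra hbad
  push_neg at hbad
  -- v is bad : f (v, p v) ≤ conflicts
  obtain ⟨q₀, hq₀⟩ := pigeon p v
  set p' : V → Fin κ := Function.update p v q₀ with hp'def
  have hp'v : p' v = q₀ := Function.update_self v q₀ p
  have hp'u : ∀ u : V, u ≠ v → p' u = p u := fun u hu => Function.update_of_ne hu q₀ p
  have hvuniv : v ∈ (Finset.univ : Finset V) := Finset.mem_univ v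
  -- recoloring v does not change its own conflict count at colour q₀
  have hsame : dzAux H p' v q₀ = dzAux H p v q₀ := by
    unfold dzAux
    refine Finset.sum_congr rfl (fun u _ => ?_)
    rcases eq_or_ne u v with rfl | hu
    · rw [if_neg (hnself u q₀ (p' u)), if_neg (hnself u q₀ (p u))]
    · rw [hp'u u hu]
  -- for u ≠ v, the conflict count changes only at the v-entry
  have hchange : ∀ u : V, u ≠ v →
      dzAux H p' u (p' u) = dzAux H p u (p u)
        - (if H.Adj (u, p u) (v, p v) then (1:ℤ) else 0)
        + (if H.Adj (u, p u) (v, q₀) then (1:ℤ) else 0) := by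
    intro u hu
    have e1 : dzAux H p' u (p' u)
        = (∑ w ∈ Finset.univ.erase v, (if H.Adj (u, p u) (w, p w) then (1:ℤ) else 0))
          + (if H.Adj (u, p u) (v, q₀) then (1:ℤ) else 0) := by
      unfold dzAux
      rw [hp'u u hu, ← Finset.sum_erase_add _ _ hvuniv, hp'v]
      congr 1
      refine Finset.sum_congr rfl (fun w hw => ?_)
      rw [hp'u w (Finset.ne_of_mem_erase hw)]
    have e2 : dzAux H p u (p u)
        = (∑ w ∈ Finset.univ.erase v, (if H.Adj (u, p u) (w, p w) then (1:ℤ) else 0))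
          + (if H.Adj (u, p u) (v, p v) then (1:ℤ) else 0) := by
      unfold dzAux
      rw [← Finset.sum_erase_add _ _ hvuniv]
    rw [e1, e2]
    ring
  -- symmetry: column sums equal row sums
  have hcol : ∀ q : Fin κ,
      (∑ u ∈ Finset.univ.erase v, (if H.Adj (u, p u) (v, q) then (1:ℤ) else 0))
        = dzAux H p v q := by
    intro q
    unfold dzAux
    rw [← Finset.sum_erase_add _ _ hvuniv, if_neg (hnself v q (p v))]
    rw [add_zero]
    refine Finset.sum_congr rfl (fun u _ => ?_)
    congr 1
    exact propext ⟨fun h => H.adj_symm h, fun h => H.adj_symm h⟩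
  -- total conflict-sum identity
  have htot : ∑ u : V, dzAux H p' u (p' u)
      = (∑ u : V, dzAux H p u (p u)) + 2 * (dzAux H p v q₀ - dzAux H p v (p v)) := by
    rw [← Finset.sum_erase_add _ _ hvuniv, ← Finset.sum_erase_add _
      (fun u => dzAux H p u (p u)) hvuniv]
    have h1 : ∑ u ∈ Finset.univ.erase v, dzAux H p' u (p' u)
        = (∑ u ∈ Finset.univ.erase v, dzAux H p u (p u))
          - dzAux H p v (p v) + dzAux H p v q₀ := by
      rw [Finset.sum_congr rfl (fun u hu => hchange u (Finset.ne_of_mem_erase hu))]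
      rw [Finset.sum_add_distrib, Finset.sum_sub_distrib, hcol (p v), hcol q₀]
    rw [h1, hp'v, hsame]
    ring
  -- the potential strictly increases: contradiction
  have hXv : (f (v, p v) : ℤ) ≤ dzAux H p v (p v) := by
    rw [hdz_ncard]
    exact_mod_cast hbad
  have hfsum : ∑ u : V, (2 * (f (u, p' u) : ℤ))
      = (∑ u : V, (2 * (f (u, p u) : ℤ)))
        - 2 * (f (v, p v) : ℤ) + 2 * (f (v, q₀) : ℤ) := by
    rw [← Finset.sum_erase_add _ _ hvuniv, ← Finset.sum_erase_add _
      (fun u => 2 * (f (u, p u) : ℤ)) hvuniv]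
    have h2 : ∑ u ∈ Finset.univ.erase v, (2 * (f (u, p' u) : ℤ))
        = ∑ u ∈ Finset.univ.erase v, (2 * (f (u, p u) : ℤ)) :=
      Finset.sum_congr rfl (fun u hu => by rw [hp'u u (Finset.ne_of_mem_erase hu)])
    rw [h2, hp'v]
    ring
  have hgt : ((∑ u : V, (2 * (f (u, p u) : ℤ))) - ∑ u : V, dzAux H p u (p u))
      < ((∑ u : V, (2 * (f (u, p' u) : ℤ))) - ∑ u : V, dzAux H p' u (p' u)) := by
    rw [htot, hfsum]
    omega
  exact absurd (hp p') (not_le.mpr hgt)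

/-- If `G` is connected and `(H, f)` is a valued cover with
`∑ q f(v,q) > deg_G v` for every vertex, then `H` has a strictly `f`-degenerate
transversal `R` in which every vertex `(v,q) ∈ R` has fewer than `f(v,q)`
neighbours inside `R`. -/
theorem exists_SFDTransversal_degree_lt
    {V : Type} [Fintype V] (G : SimpleGraph V) (hG : G.Connected) (κ : ℕ)
    (H : SimpleGraph (V × Fin κ)) (hH : IsCover κ G H) (f : V × Fin κ → ℕ)
    (hf : ∀ v : V, (G.neighborSet v).ncard < ∑ q : Fin κ, f (v, q)) :
    ∃ R : Set (V × Fin κ), IsTransversal R ∧ StrictlyFDegenerateOn H f R ∧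
      ∀ x ∈ R, (R ∩ {y | H.Adj x y}).ncard < f x := by
  classical
  obtain ⟨v₀⟩ := hG.nonempty
  have hκ : 0 < κ := by
    by_contra h
    push_neg at h
    have hk0 : κ = 0 := Nat.le_zero.mp h
    subst hk0
    simpa using hf v₀
  obtain ⟨p, hp⟩ := key_lemma G κ hκ H hH f hf
  set R : Set (V × Fin κ) := Set.range (fun v => (v, p v)) with hRdef
  have hinj : Function.Injective (fun v : V => (v, p v)) := by
    intro a b hab
    exact (Prod.ext_iff.mp hab).1
  have hdeg : ∀ x ∈ R, (R ∩ {y | H.Adj x y}).ncard < f x := by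
    rintro x ⟨v, rfl⟩
    have himg : R ∩ {y | H.Adj (v, p v) y}
        = (fun u : V => (u, p u)) '' {u : V | H.Adj (v, p v) (u, p u)} := by
      ext ⟨u, q⟩
      constructor
      · rintro ⟨⟨w, hw⟩, hadj⟩
        have hw1 : w = u := (Prod.ext_iff.mp hw).1
        have hw2 : p w = q := (Prod.ext_iff.mp hw).2
        subst hw1
        subst hw2
        exact ⟨w, hadj, rfl⟩
      · rintro ⟨w, hwadj, hw⟩
        have hw1 : w = u := (Prod.ext_iff.mp hw).1
        have hw2 : p w = q := (Prod.ext_iff.mp hw).2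
        subst hw1
        subst hw2
        exact ⟨⟨w, rfl⟩, hwadj⟩
    rw [himg, Set.ncard_image_of_injective _ hinj]
    exact_mod_cast hp v
  refine ⟨R, ?_, ?_, hdeg⟩
  · intro v
    refine ⟨p v, ⟨v, rfl⟩, ?_⟩
    rintro q ⟨w, hw⟩
    have hw1 : w = v := (Prod.ext_iff.mp hw).1
    subst hw1
    exact ((Prod.ext_iff.mp hw).2).symm
  · intro S hSR hSne
    obtain ⟨x, hx⟩ := hSne
    refine ⟨x, hx, lt_of_le_of_lt ?_ (hdeg x (hSR hx))⟩
    exact Set.ncard_le_ncard (Set.inter_subset_inter_left _ hSR) (Set.toFinite _)
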